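/- arXiv:1810.09575 — 2 statements merged into one kernel-verified Lean document; each statement's English description precedes it below -/
import Mathlib

section
/- For every α ∈ Z_X(S), H_α = S_Z. For every logical X operator λ, G_λ = Z_Z(S), and Z_Z(S) equals the subgroup of (Finset Q, Δ) generated by S_Z ∪ {λ}. (Lemma A0.) -/
open Finset
open scoped symmDiff Matrix

namespace CC

variable {Q : Type*} [Fintype Q] [DecidableEq Q]

/-- A subgroup of the abelian group `(Finset Q, ∆)`. -/
def IsSubgroup (S : Set (Finset Q)) : Prop :=
  ∅ ∈ S ∧ ∀ a ∈ S, ∀ b ∈ S, a ∆ b ∈ S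

/-- The subgroup of `(Finset Q, ∆)` generated by a set. -/
def closure (T : Set (Finset Q)) : Set (Finset Q) :=
  ⋂₀ {S : Set (Finset Q) | IsSubgroup S ∧ T ⊆ S}

/-- A CSS stabilizer code on the qubits `Q`. -/
structure CSS (Q : Type*) [Fintype Q] [DecidableEq Q] where
  SX : Set (Finset Q)
  SZ : Set (Finset Q)
  hSX : IsSubgroup SX
  hSZ : IsSubgroup SZ
  comm : ∀ a ∈ SZ, ∀ b ∈ SX, 2 ∣ (a ∩ b).card

def ZX (C : CSS Q) : Set (Finset Q) := {γ | ∀ f ∈ C.SZ, 2 ∣ (γ ∩ f).card}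

def ZZ (C : CSS Q) : Set (Finset Q) := {z | ∀ c ∈ C.SX, 2 ∣ (z ∩ c).card}

/-- Duality assumption. -/
def Dual (C : CSS Q) : Prop :=
  C.SZ = {z | ∀ γ ∈ ZX C, 2 ∣ (z ∩ γ).card} ∧
  C.SX = {c | ∀ z ∈ ZZ C, 2 ∣ (c ∩ z).card}

def LogicalX (C : CSS Q) (l : Finset Q) : Prop := l ∈ ZX C ∧ l ∉ C.SX

def LogicalZ (C : CSS Q) (l : Finset Q) : Prop := l ∈ ZZ C ∧ l ∉ C.SZ

/-- Single-logical-qubit assumption. -/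
def SingleQubit (C : CSS Q) : Prop :=
  (ZX C ≠ C.SX ∧ ∀ l l', LogicalX C l → LogicalX C l' → l ∆ l' ∈ C.SX) ∧
  (ZZ C ≠ C.SZ ∧ ∀ l l', LogicalZ C l → LogicalZ C l' → l ∆ l' ∈ C.SZ)

/-- Intersection axiom. -/
def Inter (C : CSS Q) : Prop :=
  ZZ C = {x | ∃ α ∈ ZX C, ∃ β ∈ ZX C, x = α ∩ β}

def G (C : CSS Q) (α : Finset Q) : Set (Finset Q) :=
  closure (C.SZ ∪ {x | ∃ β ∈ ZX C, x = α ∩ β})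

def H (C : CSS Q) (α : Finset Q) : Set (Finset Q) :=
  closure (C.SZ ∪ {x | ∃ β ∈ C.SX, x = α ∩ β})

def Zof (K : Set (Finset Q)) : Set (Finset Q) := {γ | ∀ h ∈ K, 2 ∣ (γ ∩ h).card}

def Tolerable (C : CSS Q) (α : Finset Q) : Prop := ∀ z ∈ G C α, ¬ LogicalZ C z

def g (b : Q → ℤ) (s : Finset Q) : ℤ := ∑ q ∈ s, b q

/-- T-invariance assumption. -/
def TInv (C : CSS Q) (b : Q → ℤ) : Prop :=
  (∀ β ∈ C.SX, (8 : ℤ) ∣ g b β) ∧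
  (∀ β ∈ C.SX, ∀ γ ∈ ZX C, (8 : ℤ) ∣ (g b β - 2 * g b (γ ∩ β)))

def E (C : CSS Q) (b : Q → ℤ) (α : Finset Q) : Set (Finset Q) :=
  {z | ∀ γ ∈ Zof (G C α), g b (γ ∩ α) ≡ 2 * ((z ∩ γ).card : ℤ) [ZMOD 4]}

/- Quantum setting -/

abbrev M (Q : Type*) [Fintype Q] [DecidableEq Q] :=
  Matrix (Q → ZMod 2) (Q → ZMod 2) ℂ

def supp (v : Q → ZMod 2) : Finset Q := Finset.univ.filter (fun q => v q = 1)

def ind (α : Finset Q) : Q → ZMod 2 := fun q => if q ∈ α then 1 else 0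

def XM (α : Finset Q) : M Q :=
  Matrix.of fun u v => if u = v + ind α then (1 : ℂ) else 0

noncomputable def ZM (α : Finset Q) : M Q :=
  Matrix.diagonal fun v => (-1 : ℂ) ^ (supp v ∩ α).card

noncomputable def AM (b : Q → ℤ) (α : Finset Q) : M Q :=
  Matrix.diagonal fun v => Complex.I ^ (g b (α ∩ supp v))

noncomputable def UM (b : Q → ℤ) : M Q :=
  Matrix.diagonal fun v => Complex.exp (Real.pi * Complex.I / 4) ^ (g b (supp v))

def Encoded (C : CSS Q) (ρ : M Q) : Prop :=
  ρ.trace = 1 ∧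
  (∀ c ∈ C.SX, XM c * ρ = ρ ∧ ρ * XM c = ρ) ∧
  (∀ f ∈ C.SZ, ZM f * ρ = ρ ∧ ρ * ZM f = ρ)

instance : Std.Commutative (α := Finset Q) (· ∆ ·) := ⟨symmDiff_comm⟩
instance : Std.Associative (α := Finset Q) (· ∆ ·) := ⟨symmDiff_assoc⟩

/-- Iterated symmetric difference over a finite index set. -/
def bigΔ {ι : Type*} (s : Finset ι) (f : ι → Finset Q) : Finset Q :=
  s.fold (· ∆ ·) ∅ f

section Aux

variable {Q : Type*} [Fintype Q] [DecidableEq Q]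

lemma isSubgroup_closure (T : Set (Finset Q)) : IsSubgroup (closure T) := by
  constructor
  · intro S hS; exact hS.1.1
  · intro a ha b hb S hS
    exact hS.1.2 a (ha S hS) b (hb S hS)

lemma subset_closure (T : Set (Finset Q)) : T ⊆ closure T := by
  intro x hx S hS; exact hS.2 hx

lemma closure_le {T S : Set (Finset Q)} (hS : IsSubgroup S) (h : T ⊆ S) :
    closure T ⊆ S := fun x hx => hx S ⟨hS, h⟩

lemma even_card_symmDiff {x y c : Finset Q}
    (hx : 2 ∣ (x ∩ c).card) (hy : 2 ∣ (y ∩ c).card) : 2 ∣ ((x ∆ y) ∩ c).card := by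
  have hdist : (x ∆ y) ∩ c = (x ∩ c) ∆ (y ∩ c) := by
    ext a; simp [Finset.mem_symmDiff, Finset.mem_inter]; tauto
  rw [hdist, symmDiff_eq_sup_sdiff_inf, Finset.sup_eq_union, Finset.inf_eq_inter,
    Finset.card_sdiff_of_subset (Finset.inter_subset_union)]
  have := Finset.card_union_add_card_inter (x ∩ c) (y ∩ c)
  have hle := Finset.card_le_card (Finset.inter_subset_union (s := x ∩ c) (t := y ∩ c))
  omega

lemma isSubgroup_ZZ (C : CSS Q) : IsSubgroup (ZZ C) := by
  refine ⟨fun c _ => by simp, fun a ha b hb c hc => ?_⟩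
  exact even_card_symmDiff (ha c hc) (hb c hc)

lemma isSubgroup_ZX (C : CSS Q) : IsSubgroup (ZX C) := by
  refine ⟨fun c _ => by simp, fun a ha b hb c hc => ?_⟩
  exact even_card_symmDiff (ha c hc) (hb c hc)

lemma SX_subset_ZX (C : CSS Q) : C.SX ⊆ ZX C := by
  intro b hb f hf
  have := C.comm f hf b hb
  rwa [Finset.inter_comm]

lemma SZ_subset_ZZ (C : CSS Q) : C.SZ ⊆ ZZ C := fun a ha b hb => C.comm a ha b hb

/-- `s ∈ S_X`, `γ ∈ Z_X` implies `s ∩ γ ∈ S_Z`. -/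
lemma inter_SX_ZX_mem_SZ (C : CSS Q) (hdual : Dual C) (hinter : Inter C)
    {s γ : Finset Q} (hs : s ∈ C.SX) (hγ : γ ∈ ZX C) : s ∩ γ ∈ C.SZ := by
  rw [hdual.1]
  intro δ hδ
  have hmem : γ ∩ δ ∈ ZZ C := by
    rw [hinter]; exact ⟨γ, hγ, δ, hδ, rfl⟩
  have := hmem s hs
  have hset : s ∩ γ ∩ δ = γ ∩ δ ∩ s := by
    ext a; simp [Finset.mem_inter]; tauto
  rwa [hset]

end Aux

/-- Lemma A0: `H_α = S_Z` for undetectable `α`, and for logical `λ`,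
`G_λ = Z_Z(S) = ⟨S_Z, λ⟩`. -/
theorem H_eq_SZ_and_G_logical
    (C : CSS Q) (hdual : Dual C) (hsingle : SingleQubit C) (hinter : Inter C) :
    (∀ α ∈ ZX C, H C α = C.SZ) ∧
    (∀ l, LogicalX C l → G C l = ZZ C ∧ ZZ C = closure (C.SZ ∪ {l})) := by
  have hZZsub := isSubgroup_ZZ C
  constructor
  · -- H_α = S_Z
    intro α hα
    apply Set.Subset.antisymm
    · apply closure_le C.hSZ
      rintro x (hx | ⟨β, hβ, rfl⟩)
      · exact hx
      · rw [Finset.inter_comm]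
        exact inter_SX_ZX_mem_SZ C hdual hinter hβ hα
    · exact (Set.subset_union_left).trans (subset_closure _)
  · intro l hl
    -- key: l ∩ β ∈ closure (S_Z ∪ {l}) for β ∈ Z_X
    have hKsub := isSubgroup_closure (C.SZ ∪ {l} : Set (Finset Q))
    have hSZK : C.SZ ⊆ closure (C.SZ ∪ {l}) :=
      (Set.subset_union_left).trans (subset_closure _)
    have hlK : l ∈ closure (C.SZ ∪ {l}) :=
      subset_closure _ (Set.mem_union_right _ rfl)
    have key : ∀ β ∈ ZX C, l ∩ β ∈ closure (C.SZ ∪ {l}) := by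
      intro β hβ
      by_cases hβS : β ∈ C.SX
      · exact hSZK (by rw [Finset.inter_comm]; exact inter_SX_ZX_mem_SZ C hdual hinter hβS hl.1)
      · -- β is logical, so β ∆ l ∈ S_X
        have hc : β ∆ l ∈ C.SX := hsingle.1.2 β l ⟨hβ, hβS⟩ hl
        have hdecomp : l ∩ β = l ∆ ((β ∆ l) ∩ l) := by
          ext a; simp [Finset.mem_symmDiff, Finset.mem_inter]; tauto
        rw [hdecomp]
        exact hKsub.2 l hlK _ (hSZK (inter_SX_ZX_mem_SZ C hdual hinter hc hl.1))
    have keyAB : ∀ α ∈ ZX C, ∀ β ∈ ZX C, α ∩ β ∈ closure (C.SZ ∪ {l}) := by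
      intro α hα β hβ
      by_cases hαS : α ∈ C.SX
      · exact hSZK (inter_SX_ZX_mem_SZ C hdual hinter hαS hβ)
      · have hc : α ∆ l ∈ C.SX := hsingle.1.2 α l ⟨hα, hαS⟩ hl
        have hdecomp : α ∩ β = (l ∩ β) ∆ ((α ∆ l) ∩ β) := by
          ext a; simp [Finset.mem_symmDiff, Finset.mem_inter]; tauto
        rw [hdecomp]
        exact hKsub.2 _ (key β hβ) _ (hSZK (inter_SX_ZX_mem_SZ C hdual hinter hc hβ))
    have hZZK : ZZ C ⊆ closure (C.SZ ∪ {l}) := by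
      intro z hz
      rw [hinter] at hz
      obtain ⟨a, ha, b, hb, rfl⟩ := hz
      exact keyAB a ha b hb
    have hKZZ : closure (C.SZ ∪ {l}) ⊆ ZZ C := by
      apply closure_le hZZsub
      rintro x (hx | rfl)
      · exact SZ_subset_ZZ C hx
      · rw [hinter]; exact ⟨x, hl.1, x, hl.1, by simp⟩
    have hZZeq : ZZ C = closure (C.SZ ∪ {l}) := Set.Subset.antisymm hZZK hKZZ
    refine ⟨?_, hZZeq⟩
    apply Set.Subset.antisymm
    · apply closure_le hZZsub
      rintro x (hx | ⟨β, hβ, rfl⟩)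
      · exact SZ_subset_ZZ C hx
      · rw [hinter]; exact ⟨l, hl.1, β, hβ, rfl⟩
    · rw [hZZeq]
      apply closure_le (isSubgroup_closure _)
      rintro x (hx | rfl)
      · exact subset_closure _ (Set.mem_union_left _ hx)
      · exact subset_closure _ (Set.mem_union_right _ ⟨x, hl.1, by simp⟩)


end CC
end

section
/- Let (S_X, S_Z) be a CSS stabilizer code on a finite type Q satisfying the duality and intersection assumptions and the T-invariance assumption, and let P_0 := (1/|S_Z|) · Σ_{f ∈ S_Z} Z_f. Then for every α : Finset Q, the matrix A_α† · P_0 lies in the ℂ-linear span of {Z_z | z ∈ E_α}. (Lemma A3.) -/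
open Finset
open scoped symmDiff Matrix

namespace CC

variable {Q : Type*} [Fintype Q] [DecidableEq Q]

/-! ### Auxiliary lemmas for Lemma A3 -/

lemma mem_closure_of_mem {T : Set (Finset Q)} {x : Finset Q} (hx : x ∈ T) :
    x ∈ closure T :=
  fun _ hS => hS.2 hx

lemma zmod2_cases (x : ZMod 2) : x = 0 ∨ x = 1 := by fin_cases x <;> simp <;> [exact Or.inl rfl; exact Or.inr rfl]

lemma supp_add (v : Q → ZMod 2) (γ : Finset Q) : supp (v + ind γ) = supp v ∆ γ := by
  ext q
  rw [Finset.mem_symmDiff]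
  rw [supp, supp, Finset.mem_filter, Finset.mem_filter]
  simp only [supp, ind, Finset.mem_filter, Finset.mem_univ, true_and, Pi.add_apply]
  by_cases hq : q ∈ γ <;> rcases zmod2_cases (v q) with h | h <;> simp [hq, h]

lemma supp_inj : Function.Injective (supp : (Q → ZMod 2) → Finset Q) := by
  intro v w h
  funext q
  have := Finset.ext_iff.1 h q
  simp only [supp, Finset.mem_filter, Finset.mem_univ, true_and] at this
  rcases zmod2_cases (v q) with h1 | h1 <;> rcases zmod2_cases (w q) with h2 | h2 <;>
    simp [h1, h2] at this ⊢

lemma g_parity (b : Q → ℤ) (hb : ∀ q, Odd (b q)) (t : Finset Q) :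
    (2 : ℤ) ∣ g b t - t.card := by
  rw [g, Finset.card_eq_sum_ones]
  push_cast
  rw [← Finset.sum_sub_distrib]
  refine Finset.dvd_sum fun q _ => ?_
  obtain ⟨k, hk⟩ := hb q
  exact ⟨k, by omega⟩

lemma g_even (b : Q → ℤ) (hb : ∀ q, Odd (b q)) {t : Finset Q} (ht : 2 ∣ t.card) :
    (2 : ℤ) ∣ g b t := by
  obtain ⟨k, hk⟩ := g_parity b hb t
  obtain ⟨m, hm⟩ := ht
  exact ⟨k + m, by push_cast at hk ⊢; omega⟩

lemma g_symmDiff (b : Q → ℤ) (A B : Finset Q) :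
    g b (A ∆ B) = g b A + g b B - 2 * g b (A ∩ B) := by
  have h1 : g b (A ∪ B) + g b (A ∩ B) = g b A + g b B := Finset.sum_union_inter
  have h2 : g b (A ∪ B) = g b (A ∆ B) + g b (A ∩ B) := by
    rw [g, g, g,
      ← Finset.sum_union (show Disjoint (A ∆ B) (A ∩ B) from disjoint_symmDiff_inf A B)]
    congr 1
    exact (symmDiff_sup_inf A B).symm
  omega

lemma card_symmDiff_aux (a c : Finset Q) :
    (a ∆ c).card + 2 * (a ∩ c).card = a.card + c.card := by
  have h1 : a ∆ c = (a ∪ c) \ (a ∩ c) := symmDiff_eq_sup_sdiff_inf a c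
  have h2 : (a ∩ c) ⊆ (a ∪ c) := (Finset.inter_subset_left).trans Finset.subset_union_left
  have h3 : (a ∆ c).card = (a ∪ c).card - (a ∩ c).card := by
    rw [h1]; exact Finset.card_sdiff_of_subset h2
  have h4 := Finset.card_union_add_card_inter a c
  have h5 := Finset.card_le_card h2
  omega

lemma neg_one_pow_symmDiff (a c : Finset Q) :
    (-1 : ℂ) ^ (a ∆ c).card = (-1) ^ a.card * (-1) ^ c.card := by
  have h : (-1 : ℂ) ^ ((a ∆ c).card + 2 * (a ∩ c).card) = (-1) ^ (a.card + c.card) := by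
    rw [card_symmDiff_aux]
  rw [pow_add, pow_add, pow_mul, neg_one_sq, one_pow, mul_one] at h
  exact h

lemma neg_one_pow_even {m : ℕ} (h : 2 ∣ m) : (-1 : ℂ) ^ m = 1 := by
  obtain ⟨k, rfl⟩ := h
  rw [pow_mul, neg_one_sq, one_pow]

lemma neg_one_pow_odd {m : ℕ} (h : ¬ 2 ∣ m) : (-1 : ℂ) ^ m = -1 :=
  Odd.neg_one_pow (Nat.odd_iff.2 (by omega))

lemma orth (u : Finset Q) :
    ∑ z : Finset Q, (-1 : ℂ) ^ (u ∩ z).card =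
      if u = ∅ then (2 : ℂ) ^ (Fintype.card Q) else 0 := by
  have key : ∀ z : Finset Q, (-1 : ℂ) ^ (u ∩ z).card
      = ∏ q ∈ z, (if q ∈ u then (-1 : ℂ) else 1) := by
    intro z
    rw [Finset.prod_ite, Finset.prod_const, Finset.prod_const, one_pow, mul_one,
      Finset.filter_mem_eq_inter, Finset.inter_comm]
  calc ∑ z : Finset Q, (-1 : ℂ) ^ (u ∩ z).card
      = ∑ z ∈ (Finset.univ : Finset Q).powerset,
          (∏ q ∈ z, (if q ∈ u then (-1 : ℂ) else 1)) * ∏ _q ∈ Finset.univ \ z, (1 : ℂ) := by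
        rw [Finset.powerset_univ]
        exact Finset.sum_congr rfl fun z _ => by rw [key z, Finset.prod_const_one, mul_one]
    _ = ∏ q : Q, ((if q ∈ u then (-1 : ℂ) else 1) + 1) := (Finset.prod_add _ _ _).symm
    _ = if u = ∅ then (2 : ℂ) ^ (Fintype.card Q) else 0 := by
        by_cases hu : u = ∅
        · subst hu
          rw [if_pos rfl]
          have h2 : ∀ q : Q, ((if q ∈ (∅ : Finset Q) then (-1 : ℂ) else 1) + 1) = 2 :=
            fun q => by norm_num
          rw [Finset.prod_congr rfl fun q _ => h2 q, Finset.prod_const, Finset.card_univ]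
        · obtain ⟨q, hq⟩ := Finset.nonempty_iff_ne_empty.2 hu
          rw [if_neg hu]
          exact Finset.prod_eq_zero (Finset.mem_univ q) (by simp [hq])

lemma I_zpow_four : Complex.I ^ (4 : ℤ) = 1 := by
  rw [show (4 : ℤ) = ((4 : ℕ) : ℤ) from rfl, zpow_natCast, Complex.I_pow_four]

lemma I_zpow_eq_one_iff {k : ℤ} : Complex.I ^ k = 1 ↔ (4 : ℤ) ∣ k := by
  constructor
  · intro h
    have hdm := Int.mul_ediv_add_emod k 4
    have h0 : (0 : ℤ) ≤ k % 4 := Int.emod_nonneg k (by norm_num)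
    have h4 : k % 4 < 4 := Int.emod_lt_of_pos k (by norm_num)
    have hI : Complex.I ^ k = Complex.I ^ (k % 4) := by
      conv_lhs => rw [← hdm]
      rw [zpow_add₀ Complex.I_ne_zero, zpow_mul, I_zpow_four, one_zpow, one_mul]
    rw [hI] at h
    interval_cases h' : (k % 4 : ℤ)
    · omega
    · rw [zpow_one] at h
      simpa using congrArg Complex.im h
    · rw [show (2 : ℤ) = ((2 : ℕ) : ℤ) from rfl, zpow_natCast, Complex.I_sq] at h
      norm_num at h
    · rw [show (3 : ℤ) = ((3 : ℕ) : ℤ) from rfl, zpow_natCast, pow_succ,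
        Complex.I_sq, neg_one_mul] at h
      simpa using congrArg Complex.im h
  · rintro ⟨m, rfl⟩
    rw [zpow_mul, I_zpow_four, one_zpow]

lemma char_sum_zero (C : CSS Q) {s f0 : Finset Q} (hf0 : f0 ∈ C.SZ)
    (hodd : ¬ 2 ∣ (s ∩ f0).card) :
    ∑ f ∈ (Set.toFinite C.SZ).toFinset, (-1 : ℂ) ^ (s ∩ f).card = 0 := by
  set T := (Set.toFinite C.SZ).toFinset with hT
  have hmem : ∀ f : Finset Q, f ∈ T ↔ f ∆ f0 ∈ T := by
    intro f
    simp only [hT, Set.Finite.mem_toFinset]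
    constructor
    · exact fun h => C.hSZ.2 f h f0 hf0
    · intro h
      have := C.hSZ.2 _ h f0 hf0
      rwa [symmDiff_symmDiff_cancel_right] at this
  have hkey : (∑ f ∈ T, (-1 : ℂ) ^ (s ∩ f).card)
      = - ∑ f ∈ T, (-1 : ℂ) ^ (s ∩ f).card := by
    have h1 : (∑ f ∈ T, (-1 : ℂ) ^ (s ∩ f).card)
        = ∑ f ∈ T, (-1 : ℂ) ^ (s ∩ (f ∆ f0)).card := by
      refine Finset.sum_nbij' (fun f => f ∆ f0) (fun f => f ∆ f0) ?_ ?_ ?_ ?_ ?_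
      · exact fun f hf => (hmem f).1 hf
      · exact fun f hf => (hmem f).1 hf
      · exact fun f _ => symmDiff_symmDiff_cancel_right f0 f
      · exact fun f _ => symmDiff_symmDiff_cancel_right f0 f
      · intro f _
        rw [symmDiff_symmDiff_cancel_right]
    conv_lhs => rw [h1]
    rw [← Finset.sum_neg_distrib]
    refine Finset.sum_congr rfl fun f _ => ?_
    have hd : s ∩ (f ∆ f0) = (s ∩ f) ∆ (s ∩ f0) := inf_symmDiff_distrib_left s f f0
    rw [hd, neg_one_pow_symmDiff, neg_one_pow_odd hodd]
    ring
  linear_combination (1 / 2 : ℂ) * hkey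

/-- Lemma A3: `A_α† · P_0` lies in the linear span of `{Z_z | z ∈ E_α}`. -/
theorem A_dagger_P0_mem_span
    (C : CSS Q) (b : Q → ℤ) (hb : ∀ q, Odd (b q))
    (hdual : Dual C) (hinter : Inter C) (htinv : TInv C b)
    (α : Finset Q) :
    (AM b α)ᴴ *
        ((((Set.toFinite C.SZ).toFinset.card : ℂ))⁻¹ •
          ∑ f ∈ (Set.toFinite C.SZ).toFinset, ZM f)
      ∈ Submodule.span ℂ {m : M Q | ∃ z ∈ E C b α, m = ZM z} := by
  classical
  set SZ : Finset (Finset Q) := (Set.toFinite C.SZ).toFinset with hSZdef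
  set d : (Q → ZMod 2) → ℂ := fun v =>
    star (Complex.I ^ g b (α ∩ supp v)) *
      (((SZ.card : ℂ))⁻¹ * ∑ f ∈ SZ, (-1 : ℂ) ^ (supp v ∩ f).card) with hd
  set coef : Finset Q → ℂ := fun z =>
    ((2 : ℂ) ^ Fintype.card Q)⁻¹ *
      ∑ v : Q → ZMod 2, d v * (-1 : ℂ) ^ (supp v ∩ z).card with hcoef
  -- Step A : the target matrix is diagonal with entries `d`
  have hA : (AM b α)ᴴ * (((SZ.card : ℂ))⁻¹ • ∑ f ∈ SZ, ZM f) = Matrix.diagonal d := by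
    have h1 : (∑ f ∈ SZ, ZM f)
        = Matrix.diagonal (fun v => ∑ f ∈ SZ, (-1 : ℂ) ^ (supp v ∩ f).card) := by
      have := (map_sum (Matrix.diagonalAddMonoidHom (Q → ZMod 2) ℂ)
        (fun f => fun v => (-1 : ℂ) ^ (supp v ∩ f).card) SZ).symm
      simp only [Matrix.diagonalAddMonoidHom, AddMonoidHom.coe_mk, ZeroHom.coe_mk] at this
      rw [show (fun v => ∑ f ∈ SZ, (-1 : ℂ) ^ (supp v ∩ f).card)
        = ∑ f ∈ SZ, (fun v => (-1 : ℂ) ^ (supp v ∩ f).card) from (by ext v; simp)]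
      rw [← this]
      rfl
    rw [AM, Matrix.diagonal_conjTranspose, h1, ← Matrix.diagonal_smul,
      Matrix.diagonal_mul_diagonal]
    congr 1
  -- Step B : Fourier expansion of the diagonal
  have hB : Matrix.diagonal d = ∑ z : Finset Q, coef z • ZM z := by
    have h2 : ∀ z : Finset Q, coef z • ZM z
        = Matrix.diagonal (fun v => coef z * (-1 : ℂ) ^ (supp v ∩ z).card) := by
      intro z
      rw [ZM, ← Matrix.diagonal_smul]
      congr 1
    rw [Finset.sum_congr rfl fun z _ => h2 z]
    have h3 := (map_sum (Matrix.diagonalAddMonoidHom (Q → ZMod 2) ℂ)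
      (fun z => fun v => coef z * (-1 : ℂ) ^ (supp v ∩ z).card) Finset.univ)
    simp only [Matrix.diagonalAddMonoidHom, AddMonoidHom.coe_mk, ZeroHom.coe_mk] at h3
    rw [← h3]
    refine congrArg Matrix.diagonal (funext fun v => ?_)
    rw [Finset.sum_apply]
    -- Fourier inversion at the point `v`
    have horth : ∀ w : Q → ZMod 2,
        (∑ z : Finset Q, (-1 : ℂ) ^ (supp w ∩ z).card * (-1 : ℂ) ^ (supp v ∩ z).card)
          = if w = v then (2 : ℂ) ^ Fintype.card Q else 0 := by
      intro w
      have hterm : ∀ z : Finset Q,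
          (-1 : ℂ) ^ (supp w ∩ z).card * (-1 : ℂ) ^ (supp v ∩ z).card
            = (-1 : ℂ) ^ ((supp w ∆ supp v) ∩ z).card := by
        intro z
        rw [show (supp w ∆ supp v) ∩ z = (supp w ∩ z) ∆ (supp v ∩ z) from
          inf_symmDiff_distrib_right (supp w) (supp v) z, neg_one_pow_symmDiff]
      have hcond : (supp w ∆ supp v = ∅) ↔ w = v := by
        rw [← Finset.bot_eq_empty, symmDiff_eq_bot]
        exact ⟨fun h => supp_inj h, fun h => by rw [h]⟩
      rw [Finset.sum_congr rfl fun z _ => hterm z, orth, if_congr hcond rfl rfl]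
    have hAv : (∑ z : Finset Q, coef z * (-1 : ℂ) ^ (supp v ∩ z).card) = d v := by
      have e1 : ∀ z : Finset Q, coef z * (-1 : ℂ) ^ (supp v ∩ z).card
          = ((2 : ℂ) ^ Fintype.card Q)⁻¹ * ∑ w : Q → ZMod 2,
              d w * ((-1 : ℂ) ^ (supp w ∩ z).card * (-1 : ℂ) ^ (supp v ∩ z).card) := by
        intro z
        calc coef z * (-1 : ℂ) ^ (supp v ∩ z).card
            = ((2 : ℂ) ^ Fintype.card Q)⁻¹ *
                ((∑ w : Q → ZMod 2, d w * (-1 : ℂ) ^ (supp w ∩ z).card) *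
                  (-1 : ℂ) ^ (supp v ∩ z).card) := by
              rw [hcoef]; ring
          _ = ((2 : ℂ) ^ Fintype.card Q)⁻¹ * ∑ w : Q → ZMod 2,
                d w * ((-1 : ℂ) ^ (supp w ∩ z).card * (-1 : ℂ) ^ (supp v ∩ z).card) := by
              rw [Finset.sum_mul]
              congr 1
              exact Finset.sum_congr rfl fun w _ => by ring
      calc (∑ z : Finset Q, coef z * (-1 : ℂ) ^ (supp v ∩ z).card)
          = ((2 : ℂ) ^ Fintype.card Q)⁻¹ * ∑ z : Finset Q, ∑ w : Q → ZMod 2,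
              d w * ((-1 : ℂ) ^ (supp w ∩ z).card * (-1 : ℂ) ^ (supp v ∩ z).card) := by
            rw [Finset.sum_congr rfl fun z _ => e1 z, ← Finset.mul_sum]
        _ = ((2 : ℂ) ^ Fintype.card Q)⁻¹ * ∑ w : Q → ZMod 2,
              d w * ∑ z : Finset Q,
                (-1 : ℂ) ^ (supp w ∩ z).card * (-1 : ℂ) ^ (supp v ∩ z).card := by
            rw [Finset.sum_comm]
            congr 1
            exact Finset.sum_congr rfl fun w _ => (Finset.mul_sum _ _ _).symm
        _ = ((2 : ℂ) ^ Fintype.card Q)⁻¹ * ∑ w : Q → ZMod 2,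
              d w * (if w = v then (2 : ℂ) ^ Fintype.card Q else 0) := by
            congr 1
            exact Finset.sum_congr rfl fun w _ => by rw [horth w]
        _ = ((2 : ℂ) ^ Fintype.card Q)⁻¹ * (d v * (2 : ℂ) ^ Fintype.card Q) := by
            congr 1
            rw [Finset.sum_congr rfl fun w _ => (by rw [mul_ite, mul_zero] :
              d w * (if w = v then (2 : ℂ) ^ Fintype.card Q else 0)
                = if w = v then d w * (2 : ℂ) ^ Fintype.card Q else 0)]
            rw [Finset.sum_ite_eq' Finset.univ v
              (fun w => d w * (2 : ℂ) ^ Fintype.card Q)]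
            simp
        _ = d v := by
            have h2n : ((2 : ℂ) ^ Fintype.card Q) ≠ 0 := pow_ne_zero _ two_ne_zero
            field_simp
    exact hAv.symm
  -- Step C : every Fourier coefficient that survives indexes an element of `E`
  have hmemE : ∀ z : Finset Q, coef z ≠ 0 → z ∈ E C b α := by
    intro z hz γ0 hγ0
    have hγ0' : ∀ h ∈ G C α, 2 ∣ (γ0 ∩ h).card := hγ0
    have hSZG : ∀ f ∈ C.SZ, f ∈ G C α := fun f hf => mem_closure_of_mem (Or.inl hf)
    have hcapG : ∀ β ∈ ZX C, α ∩ β ∈ G C α :=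
      fun β hβ => mem_closure_of_mem (Or.inr ⟨β, hβ, rfl⟩)
    set u : ℂ := star (Complex.I ^ g b (α ∩ γ0)) * (-1 : ℂ) ^ (γ0 ∩ z).card with hu
    -- the sum over `S_Z` is invariant under translating the point by `γ0`
    have hsum_eq : ∀ s : Finset Q,
        (∑ f ∈ SZ, (-1 : ℂ) ^ ((s ∆ γ0) ∩ f).card)
          = ∑ f ∈ SZ, (-1 : ℂ) ^ (s ∩ f).card := by
      intro s
      refine Finset.sum_congr rfl fun f hf => ?_
      have hfSZ : f ∈ C.SZ := (Set.Finite.mem_toFinset _).1 hf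
      have hdist : (s ∆ γ0) ∩ f = (s ∩ f) ∆ (γ0 ∩ f) :=
        inf_symmDiff_distrib_right s γ0 f
      rw [hdist, neg_one_pow_symmDiff, neg_one_pow_even (hγ0' f (hSZG f hfSZ)), mul_one]
    -- the key translation identity for the Fourier coefficient
    have key : coef z = u * coef z := by
      have hshift : (∑ v : Q → ZMod 2, d v * (-1 : ℂ) ^ (supp v ∩ z).card)
          = ∑ v : Q → ZMod 2,
              d (v + ind γ0) * (-1 : ℂ) ^ (supp (v + ind γ0) ∩ z).card := by
        exact (Equiv.sum_comp (Equiv.addRight (ind γ0))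
          (fun v => d v * (-1 : ℂ) ^ (supp v ∩ z).card)).symm
      have hterm : ∀ v : Q → ZMod 2,
          d (v + ind γ0) * (-1 : ℂ) ^ (supp (v + ind γ0) ∩ z).card
            = u * (d v * (-1 : ℂ) ^ (supp v ∩ z).card) := by
        intro v
        set s : Finset Q := supp v with hs
        have hsupp : supp (v + ind γ0) = s ∆ γ0 := supp_add v γ0
        have hzfac : (-1 : ℂ) ^ ((s ∆ γ0) ∩ z).card
            = (-1 : ℂ) ^ (s ∩ z).card * (-1 : ℂ) ^ (γ0 ∩ z).card := by
          rw [show (s ∆ γ0) ∩ z = (s ∩ z) ∆ (γ0 ∩ z) from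
            inf_symmDiff_distrib_right s γ0 z, neg_one_pow_symmDiff]
        by_cases hsx : s ∈ ZX C
        · -- the star factor splits
          have hαG : α ∩ s ∈ G C α := hcapG s hsx
          have hcard : 2 ∣ (α ∩ s ∩ γ0).card := by
            have := hγ0' (α ∩ s) hαG
            rwa [Finset.inter_comm] at this
          have hgeven : (2 : ℤ) ∣ g b (α ∩ s ∩ γ0) := g_even b hb hcard
          have hIfac : Complex.I ^ g b (α ∩ (s ∆ γ0))
              = Complex.I ^ g b (α ∩ s) * Complex.I ^ g b (α ∩ γ0) := by
            have hαdist : α ∩ (s ∆ γ0) = (α ∩ s) ∆ (α ∩ γ0) :=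
              inf_symmDiff_distrib_left α s γ0
            have hinter : (α ∩ s) ∩ (α ∩ γ0) = α ∩ s ∩ γ0 := by
              ext q; simp only [Finset.mem_inter]; tauto
            have hg : g b (α ∩ (s ∆ γ0))
                = g b (α ∩ s) + g b (α ∩ γ0) + (-(2 * g b (α ∩ s ∩ γ0))) := by
              rw [hαdist, g_symmDiff, hinter]; ring
            rw [hg, zpow_add₀ Complex.I_ne_zero, zpow_add₀ Complex.I_ne_zero]
            have h4 : (4 : ℤ) ∣ -(2 * g b (α ∩ s ∩ γ0)) := by
              obtain ⟨m, hm⟩ := hgeven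
              exact ⟨-m, by rw [hm]; ring⟩
            rw [I_zpow_eq_one_iff.2 h4, mul_one]
          rw [hsupp, hd]
          simp only
          rw [hsupp, hsum_eq s, hIfac, hzfac, star_mul', hu]
          ring
        · -- both sides vanish
          have hex : ∃ f0 ∈ C.SZ, ¬ 2 ∣ (s ∩ f0).card := by
            by_contra hcon
            push_neg at hcon
            exact hsx fun f hf => hcon f hf
          obtain ⟨f0, hf0, hodd⟩ := hex
          have hzero : (∑ f ∈ SZ, (-1 : ℂ) ^ (s ∩ f).card) = 0 := by
            rw [hSZdef]; exact char_sum_zero C hf0 hodd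
          rw [hd]
          simp only
          rw [hsupp, hsum_eq s, hzero]
          ring
      have h7 : (∑ v : Q → ZMod 2, d v * (-1 : ℂ) ^ (supp v ∩ z).card)
          = u * ∑ v : Q → ZMod 2, d v * (-1 : ℂ) ^ (supp v ∩ z).card := by
        conv_lhs => rw [hshift, Finset.sum_congr rfl fun v _ => hterm v]
        rw [← Finset.mul_sum]
      calc coef z
          = ((2 : ℂ) ^ Fintype.card Q)⁻¹ *
              ∑ v : Q → ZMod 2, d v * (-1 : ℂ) ^ (supp v ∩ z).card := rfl
        _ = ((2 : ℂ) ^ Fintype.card Q)⁻¹ *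
              (u * ∑ v : Q → ZMod 2, d v * (-1 : ℂ) ^ (supp v ∩ z).card) := by
            exact congrArg (fun t => ((2 : ℂ) ^ Fintype.card Q)⁻¹ * t) h7
        _ = u * (((2 : ℂ) ^ Fintype.card Q)⁻¹ *
              ∑ v : Q → ZMod 2, d v * (-1 : ℂ) ^ (supp v ∩ z).card) := by ring
        _ = u * coef z := rfl
    -- deduce `u = 1`
    have hu1 : u = 1 := by
      have h5 : (u - 1) * coef z = 0 := by linear_combination -key
      rcases mul_eq_zero.1 h5 with h6 | h6
      · exact sub_eq_zero.1 h6
      · exact absurd h6 hz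
    -- translate `u = 1` into the required congruence
    have h9 : Complex.I ^ g b (α ∩ γ0) * (-1 : ℂ) ^ (γ0 ∩ z).card = 1 := by
      have h := congrArg star hu1
      rw [hu] at h
      simp only [star_mul', star_star, star_pow, star_neg, star_one] at h
      exact h
    have hmm2 : ((-1 : ℂ) ^ (γ0 ∩ z).card) * ((-1 : ℂ) ^ (γ0 ∩ z).card) = 1 := by
      rw [← pow_add]
      exact neg_one_pow_even ⟨(γ0 ∩ z).card, by ring⟩
    have hIgb : Complex.I ^ g b (α ∩ γ0) = (-1 : ℂ) ^ (γ0 ∩ z).card := by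
      calc Complex.I ^ g b (α ∩ γ0)
          = Complex.I ^ g b (α ∩ γ0) *
              (((-1 : ℂ) ^ (γ0 ∩ z).card) * ((-1 : ℂ) ^ (γ0 ∩ z).card)) := by
            rw [hmm2, mul_one]
        _ = (Complex.I ^ g b (α ∩ γ0) * (-1 : ℂ) ^ (γ0 ∩ z).card) *
              (-1 : ℂ) ^ (γ0 ∩ z).card := by ring
        _ = (-1 : ℂ) ^ (γ0 ∩ z).card := by rw [h9, one_mul]
    have h10 : Complex.I ^ (g b (α ∩ γ0) - 2 * ((γ0 ∩ z).card : ℤ)) = 1 := by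
      rw [zpow_sub₀ Complex.I_ne_zero]
      have h11 : Complex.I ^ (2 * ((γ0 ∩ z).card : ℤ))
          = (-1 : ℂ) ^ (γ0 ∩ z).card := by
        rw [show (2 * ((γ0 ∩ z).card : ℤ)) = ((2 * (γ0 ∩ z).card : ℕ) : ℤ) by
          push_cast; ring, zpow_natCast, pow_mul, Complex.I_sq]
      rw [h11, hIgb]
      exact mul_inv_cancel₀ (pow_ne_zero _ (by norm_num))
    have h12 : (4 : ℤ) ∣ g b (α ∩ γ0) - 2 * ((γ0 ∩ z).card : ℤ) :=
      I_zpow_eq_one_iff.1 h10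
    have hca : γ0 ∩ α = α ∩ γ0 := Finset.inter_comm _ _
    have hcz : z ∩ γ0 = γ0 ∩ z := Finset.inter_comm _ _
    rw [hca, hcz]
    refine Int.modEq_iff_dvd.2 ?_
    obtain ⟨t, ht⟩ := h12
    exact ⟨-t, by omega⟩
  rw [hA, hB]
  refine Submodule.sum_mem _ fun z _ => ?_
  by_cases hz : coef z = 0
  · rw [hz, zero_smul]
    exact Submodule.zero_mem _
  · exact Submodule.smul_mem _ _ (Submodule.subset_span ⟨z, hmemE z hz, rfl⟩)


end CC
end
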